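/- Let H be a complex Hilbert space, G : H ≃L[ℂ] H an invertible selfadjoint continuous linear operator, and P : H →L[ℂ] H a continuous linear projection (P ∘ P = P) whose adjoint satisfies P† = G ∘ P ∘ G⁻¹. Suppose φ₁, φ₂ ∈ H are linearly independent, P φ₁ = φ₁, P φ₂ = φ₂, the range of P equals the complex span of {φ₁, φ₂}, and ⟪φ₂, G φ₁⟫ = 0. Then ⟪φ₁, G φ₁⟫ ≠ 0. -/

import Mathlib

open scoped ComplexInnerProductSpace

/-- Non-vanishing of the normalization factor `N₁ = (φ₁, G φ₁)` for a twofold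
degenerate eigenvalue with two linearly independent eigenfunctions spanning the
range of the Riesz projection `P`. -/
theorem normalization_ne_zero_degenerate
    {H : Type*} [NormedAddCommGroup H] [InnerProductSpace ℂ H] [CompleteSpace H]
    (G : H ≃L[ℂ] H) (hG : ∀ f g : H, ⟪G f, g⟫ = ⟪f, G g⟫)
    (P : H →L[ℂ] H) (hP : P ∘L P = P)
    (hadj : ContinuousLinearMap.adjoint P = (G : H →L[ℂ] H) ∘L P ∘L (G.symm : H →L[ℂ] H))
    (φ₁ φ₂ : H) (hind : LinearIndependent ℂ ![φ₁, φ₂])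
    (hPφ₁ : P φ₁ = φ₁) (hPφ₂ : P φ₂ = φ₂)
    (hrange : LinearMap.range (P : H →ₗ[ℂ] H) = Submodule.span ℂ {φ₁, φ₂})
    (hort : ⟪φ₂, G φ₁⟫ = 0) :
    ⟪φ₁, G φ₁⟫ ≠ 0 := by
  intro hzero
  -- the adjoint of P fixes G φ₁
  have hadjfix : ContinuousLinearMap.adjoint P (G φ₁) = G φ₁ := by
    rw [hadj]
    simp [hPφ₁]
  -- hence ⟪G φ₁, f⟫ = ⟪G φ₁, P f⟫ for all f
  have key : ∀ f : H, ⟪(G φ₁ : H), f⟫ = ⟪(G φ₁ : H), P f⟫ := by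
    intro f
    rw [← ContinuousLinearMap.adjoint_inner_left, hadjfix]
  -- G φ₁ is orthogonal to the range of P
  have horth : ∀ f : H, ⟪(G φ₁ : H), P f⟫ = 0 := by
    intro f
    have hmem : P f ∈ Submodule.span ℂ ({φ₁, φ₂} : Set H) := by
      rw [← hrange]; exact ⟨f, rfl⟩
    rcases Submodule.mem_span_pair.1 hmem with ⟨a, b, hab⟩
    have h1 : ⟪(G φ₁ : H), φ₁⟫ = 0 := by
      rw [← inner_conj_symm, hzero, map_zero]
    have h2 : ⟪(G φ₁ : H), φ₂⟫ = 0 := by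
      rw [← inner_conj_symm, hort, map_zero]
    rw [← hab, inner_add_right, inner_smul_right, inner_smul_right, h1, h2]
    ring
  have hGzero : (G φ₁ : H) = 0 := by
    have : ⟪(G φ₁ : H), (G φ₁ : H)⟫ = 0 := by
      rw [key (G φ₁)]; exact horth (G φ₁)
    exact inner_self_eq_zero.1 this
  have hφ₁ : φ₁ = 0 := G.injective (by rw [hGzero, map_zero])
  have := hind.ne_zero 0
  simp [hφ₁] at this
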